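/- A finite Borel measure μ on ℝ has the Steinhaus property if and only if μ is absolutely continuous with respect to Lebesgue measure. -/

import Mathlib

open MeasureTheory Set Pointwise
open scoped ENNReal

def HasSP (μ : Measure ℝ) : Prop :=
  ∀ A : Set ℝ, MeasurableSet A → 0 < μ A → ∃ ε > 0, Set.Ioo (-ε) ε ⊆ A - A

/-- Key lemma: if `A` is Lebesgue-null, then for a.e. `t`, `μ (A ∩ (A + t)) = 0`. -/
lemma ae_shift_inter_null (μ : Measure ℝ) [IsFiniteMeasure μ] (A : Set ℝ)
    (hA : MeasurableSet A) (hA0 : volume A = 0) :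
    ∀ᵐ t ∂(volume : Measure ℝ), μ (A ∩ {x | x - t ∈ A}) = 0 := by
  have hmeas : Measurable (Function.uncurry fun t x =>
      A.indicator (1 : ℝ → ℝ≥0∞) x * A.indicator (1 : ℝ → ℝ≥0∞) (x - t)) := by
    apply Measurable.mul
    · exact (measurable_indicator_const_iff (1 : ℝ≥0∞)).2 hA |>.comp measurable_snd
    · exact ((measurable_indicator_const_iff (1 : ℝ≥0∞)).2 hA).comp
        (measurable_snd.sub measurable_fst)
  have hrepr : ∀ t : ℝ, μ (A ∩ {x | x - t ∈ A}) =
      ∫⁻ x, A.indicator 1 x * A.indicator 1 (x - t) ∂μ := by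
    intro t
    have : ∀ x : ℝ, A.indicator (1 : ℝ → ℝ≥0∞) x * A.indicator 1 (x - t) =
        (A ∩ {x | x - t ∈ A}).indicator 1 x := by
      intro x
      by_cases hx : x ∈ A <;> by_cases hx' : x - t ∈ A <;>
        simp [Set.indicator_apply, hx, hx', Set.mem_inter_iff]
    simp_rw [this]
    exact (lintegral_indicator_one (hA.inter (hA.preimage (measurable_id.sub_const t)))).symm
  have hint : ∫⁻ t, μ (A ∩ {x | x - t ∈ A}) ∂(volume : Measure ℝ) = 0 := by
    calc ∫⁻ t, μ (A ∩ {x | x - t ∈ A}) ∂(volume : Measure ℝ)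
        = ∫⁻ t, ∫⁻ x, A.indicator 1 x * A.indicator 1 (x - t) ∂μ ∂(volume : Measure ℝ) := by
          simp_rw [hrepr]
      _ = ∫⁻ x, ∫⁻ t, A.indicator 1 x * A.indicator 1 (x - t) ∂(volume : Measure ℝ) ∂μ :=
          lintegral_lintegral_swap hmeas.aemeasurable
      _ = ∫⁻ x, A.indicator 1 x * ∫⁻ t, A.indicator 1 (x - t) ∂(volume : Measure ℝ) ∂μ := by
          congr 1; funext x
          have hm : Measurable fun t : ℝ => A.indicator (1 : ℝ → ℝ≥0∞) (x - t) :=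
            ((measurable_indicator_const_iff (1 : ℝ≥0∞)).2 hA).comp
              (measurable_const.sub measurable_id)
          exact lintegral_const_mul _ hm
      _ = 0 := by
          have : ∀ x : ℝ, ∫⁻ t, A.indicator (1 : ℝ → ℝ≥0∞) (x - t) ∂(volume : Measure ℝ) = 0 := by
            intro x
            have hmp : MeasurePreserving (fun t : ℝ => x - t) volume volume :=
              Measure.measurePreserving_sub_left volume x
            have h1 := hmp.lintegral_comp (f := fun y => A.indicator (1 : ℝ → ℝ≥0∞) y)
              ((measurable_indicator_const_iff (1 : ℝ≥0∞)).2 hA)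
            exact h1.trans (by rw [lintegral_indicator_one hA, hA0])
          simp only [this, mul_zero, lintegral_zero]
  have haemeas : Measurable fun t => μ (A ∩ {x | x - t ∈ A}) := by
    have := hmeas.lintegral_prod_right (ν := μ)
    simpa only [← hrepr] using this
  exact (lintegral_eq_zero_iff haemeas).1 hint

theorem SP_iff_absolutelyContinuous (μ : Measure ℝ) [IsFiniteMeasure μ] :
    HasSP μ ↔ μ ≪ (volume : Measure ℝ) := by
  constructor
  · intro hSP
    by_contra hac
    rw [Measure.AbsolutelyContinuous] at hac
    push_neg at hac
    obtain ⟨A₀, hA₀0, hμA₀⟩ := hac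
    -- replace by a measurable superset which is still volume-null
    obtain ⟨A, hA₀A, hA, hA0⟩ := exists_measurable_superset_of_null hA₀0
    have hμA : 0 < μ A :=
      pos_iff_ne_zero.mpr fun h => hμA₀ (measure_mono_null hA₀A h)
    have hae := ae_shift_inter_null μ A hA hA0
    -- choose t n ∈ (0, 1/(n+1)) with μ (A ∩ (A + t n)) = 0
    have hchoice : ∀ n : ℕ, ∃ t : ℝ, t ∈ Set.Ioo (0 : ℝ) (1 / (n + 1)) ∧
        μ (A ∩ {x | x - t ∈ A}) = 0 := by
      intro n
      have hpos : 0 < volume (Set.Ioo (0 : ℝ) (1 / (n + 1))) := by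
        rw [Real.volume_Ioo]
        simp only [sub_zero]
        rw [ENNReal.ofReal_pos]
        positivity
      by_contra hcon
      push_neg at hcon
      have : Set.Ioo (0 : ℝ) (1 / (n + 1)) ⊆ {t | ¬ μ (A ∩ {x | x - t ∈ A}) = 0} := by
        intro t ht; exact hcon t ht
      have := measure_mono_null this hae
      exact absurd this hpos.ne'
    choose t ht hμt using hchoice
    set B : Set ℝ := A \ ⋃ n, {x | x - t n ∈ A} with hB
    have hBmeas : MeasurableSet B :=
      hA.diff (MeasurableSet.iUnion fun n => hA.preimage (measurable_id.sub_const (t n)))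
    have hμB : 0 < μ B := by
      have hsub : A ⊆ B ∪ ⋃ n, (A ∩ {x | x - t n ∈ A}) := by
        intro x hx
        by_cases hxB : x ∈ B
        · exact Or.inl hxB
        · right
          simp only [hB, Set.mem_diff, not_and, not_not] at hxB
          obtain ⟨n, hn⟩ := Set.mem_iUnion.1 (hxB hx)
          exact Set.mem_iUnion.2 ⟨n, ⟨hx, hn⟩⟩
      have h0 : μ (⋃ n, (A ∩ {x | x - t n ∈ A})) = 0 :=
        measure_iUnion_null fun n => hμt n
      have : μ A ≤ μ B + 0 := by
        rw [← h0]
        exact le_trans (measure_mono hsub) (measure_union_le _ _)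
      rw [add_zero] at this
      exact lt_of_lt_of_le hμA this
    obtain ⟨ε, hε, hIoo⟩ := hSP B hBmeas hμB
    obtain ⟨n, hn⟩ := exists_nat_one_div_lt hε
    have htn : t n ∈ Set.Ioo (-ε) ε := by
      obtain ⟨ht1, ht2⟩ := ht n
      constructor
      · linarith
      · exact lt_trans ht2 (by exact_mod_cast hn)
    obtain ⟨b, hb, b', hb', hbb⟩ := Set.mem_sub.1 (hIoo htn)
    have hbA : b ∈ A := hb.1
    have hb'A : b' ∈ A := hb'.1
    have : b - t n ∈ A := by rw [show b - t n = b' by linarith [hbb]]; exact hb'A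
    exact hb.2 (Set.mem_iUnion.2 ⟨n, this⟩)
  · intro hac A hA hμA
    have hvA : 0 < volume A := by
      rcases eq_or_ne (volume A) 0 with h | h
      · exact absurd (hac h) hμA.ne'
      · exact lt_of_le_of_ne zero_le (Ne.symm h)
    have := MeasureTheory.Measure.sub_mem_nhds_zero_of_addHaar_pos volume A hA hvA
    rw [Metric.mem_nhds_iff] at this
    obtain ⟨ε, hε, hball⟩ := this
    refine ⟨ε, hε, ?_⟩
    have : Metric.ball (0 : ℝ) ε = Set.Ioo (-ε) ε := by
      rw [Real.ball_eq_Ioo]; ring_nf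
    rw [← this]
    exact hball
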